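/- Let K be a field, n ≥ 2, and let A be the n×n nilpotent Jordan block A = Σ_{i=1}^{n-1} e_{i,i+1}. For any scalars a_{i,j} ∈ K with Σ_{i=1}^n a_{i,i} = 0, there exists a matrix B ∈ M_n(K) such that [A,B] = Σ_{i=1}^n a_{i,i} e_{i,i} + Σ_{i=1}^{n-1} a_{i,i+1} e_{i,i+1}. -/
import Mathlib

open Matrix

/-- The nilpotent Jordan block `A = ∑_{i=1}^{n-1} e_{i,i+1}`. -/
def jordanBlock (K : Type*) [Field K] (n : ℕ) : Matrix (Fin n) (Fin n) K :=
  Matrix.of fun i j => if (j : ℕ) = (i : ℕ) + 1 then (1 : K) else 0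

/-- The upper bidiagonal matrix `∑_i a_{i,i} e_{i,i} + ∑_i a_{i,i+1} e_{i,i+1}`. -/
def upperBidiag {K : Type*} [Field K] {n : ℕ} (a : Fin n → Fin n → K) :
    Matrix (Fin n) (Fin n) K :=
  Matrix.of fun i j =>
    if j = i then a i i else if (j : ℕ) = (i : ℕ) + 1 then a i j else 0

lemma jordan_mul {K : Type*} [Field K] {n : ℕ} (B : Matrix (Fin n) (Fin n) K)
    (i j : Fin n) :
    (jordanBlock K n * B) i j = if h : (i : ℕ) + 1 < n then B ⟨(i:ℕ)+1, h⟩ j else 0 := by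
  rw [Matrix.mul_apply]
  by_cases h : (i : ℕ) + 1 < n
  · rw [dif_pos h, Finset.sum_eq_single (⟨(i:ℕ)+1, h⟩ : Fin n)]
    · simp [jordanBlock]
    · intro b _ hb
      have : (b : ℕ) ≠ (i : ℕ) + 1 := by
        intro hc; exact hb (Fin.ext hc)
      simp [jordanBlock, this]
    · simp
  · rw [dif_neg h]
    apply Finset.sum_eq_zero
    intro b _
    have : (b : ℕ) ≠ (i : ℕ) + 1 := by
      intro hc; exact h (hc ▸ b.isLt)
    simp [jordanBlock, this]

lemma mul_jordan {K : Type*} [Field K] {n : ℕ} (B : Matrix (Fin n) (Fin n) K)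
    (i j : Fin n) :
    (B * jordanBlock K n) i j =
      if h : 1 ≤ (j : ℕ) then B i ⟨(j:ℕ)-1, by omega⟩ else 0 := by
  rw [Matrix.mul_apply]
  by_cases h : 1 ≤ (j : ℕ)
  · rw [dif_pos h, Finset.sum_eq_single (⟨(j:ℕ)-1, by omega⟩ : Fin n)]
    · have : (j : ℕ) = ((j:ℕ)-1) + 1 := by omega
      simp [jordanBlock, ← this]
    · intro b _ hb
      have : (j : ℕ) ≠ (b : ℕ) + 1 := by
        intro hc
        apply hb; apply Fin.ext; simp; omega
      simp [jordanBlock, this]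
    · simp
  · rw [dif_neg h]
    apply Finset.sum_eq_zero
    intro b _
    have : (j : ℕ) ≠ (b : ℕ) + 1 := by omega
    simp [jordanBlock, this]

theorem stmt_0 (K : Type*) [Field K] (n : ℕ) (hn : 2 ≤ n)
    (a : Fin n → Fin n → K) (ha : ∑ i, a i i = 0) :
    ∃ B : Matrix (Fin n) (Fin n) K,
      jordanBlock K n * B - B * jordanBlock K n = upperBidiag a := by
  classical
  set d : ℕ → K := fun k => if h : k < n then a ⟨k, h⟩ ⟨k, h⟩ else 0 with hd
  set s : ℕ → K := fun k => if h : k + 1 < n then a ⟨k, by omega⟩ ⟨k+1, h⟩ else 0 with hs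
  have htr : ∑ k ∈ Finset.range n, d k = 0 := by
    rw [← Fin.sum_univ_eq_sum_range]
    rw [← ha]
    apply Finset.sum_congr rfl
    intro i _
    simp [hd, i.isLt]
  refine ⟨Matrix.of fun p q : Fin n =>
    if (p : ℕ) = (q : ℕ) + 1 then ∑ k ∈ Finset.range ((q:ℕ)+1), d k
    else if (p : ℕ) = (q : ℕ) then ∑ k ∈ Finset.range (p:ℕ), s k
    else 0, ?_⟩
  ext i j
  rw [Matrix.sub_apply, jordan_mul, mul_jordan]
  simp only [Matrix.of_apply, upperBidiag]
  by_cases hij : j = i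
  · subst hij
    simp only [if_pos rfl]
    by_cases h1 : (j : ℕ) + 1 < n
    · rw [dif_pos h1]
      by_cases h2 : 1 ≤ (j : ℕ)
      · rw [dif_pos h2]
        have e2 : (j : ℕ) - 1 + 1 = (j : ℕ) := Nat.sub_add_cancel h2
        simp only [if_pos rfl, e2, Finset.sum_range_succ, add_sub_cancel_left]
        simp [hd, j.isLt]
      · rw [dif_neg h2]
        have hj0 : (j : ℕ) = 0 := by omega
        simp only [if_pos rfl, hj0, Finset.sum_range_one]
        have hj : j = ⟨0, by omega⟩ := Fin.ext hj0
        rw [hj]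
        simp [hd, show 0 < n by omega]
    · have h2 : 1 ≤ (j : ℕ) := by omega
      have hjn : (j : ℕ) = n - 1 := by omega
      rw [dif_neg h1, dif_pos h2]
      have e2 : (j : ℕ) - 1 + 1 = (j : ℕ) := Nat.sub_add_cancel h2
      simp only [if_pos rfl, e2]
      have htr2 : ∑ k ∈ Finset.range ((j:ℕ)+1), d k = 0 := by
        have hjn' : (j:ℕ) + 1 = n := by omega
        rw [hjn', htr]
      rw [Finset.sum_range_succ] at htr2
      have : ∑ k ∈ Finset.range (j:ℕ), d k = - d (j:ℕ) :=
        eq_neg_of_add_eq_zero_left htr2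
      rw [this]
      simp [hd, j.isLt]
  · have hij' : (j : ℕ) ≠ (i : ℕ) := fun hc => hij (Fin.ext hc)
    rw [if_neg hij]
    by_cases hsup : (j : ℕ) = (i : ℕ) + 1
    · rw [if_pos hsup]
      have h1 : (i : ℕ) + 1 < n := hsup ▸ j.isLt
      have h2 : 1 ≤ (j : ℕ) := by omega
      rw [dif_pos h1, dif_pos h2]
      have c1 : (i : ℕ) + 1 ≠ (j : ℕ) + 1 := by omega
      have c2 : (i : ℕ) + 1 = (j : ℕ) := hsup.symm
      have c3 : (i : ℕ) ≠ (j : ℕ) - 1 + 1 := by omega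
      have c4 : (i : ℕ) = (j : ℕ) - 1 := by omega
      simp only [if_neg c1, if_pos c2, if_neg c3, if_pos c4, c4.symm,
        Finset.sum_range_succ, add_sub_cancel_left]
      have hj : j = ⟨(i:ℕ)+1, h1⟩ := Fin.ext hsup
      simp [hs, h1, hj]
    · rw [if_neg hsup]
      by_cases h1 : (i : ℕ) + 1 < n
      · rw [dif_pos h1]
        by_cases h2 : 1 ≤ (j : ℕ)
        · rw [dif_pos h2]
          have c1 : (i : ℕ) + 1 ≠ (j : ℕ) + 1 := by omega
          have c2 : (i : ℕ) + 1 ≠ (j : ℕ) := by omega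
          have c3 : (i : ℕ) ≠ (j : ℕ) - 1 + 1 := by omega
          have c4 : (i : ℕ) ≠ (j : ℕ) - 1 := by
            intro hc; apply hsup; omega
          simp [Ne.symm hij', c2, c3, c4]
        · rw [dif_neg h2]
          have c1 : (i : ℕ) + 1 ≠ (j : ℕ) + 1 := by omega
          have c2 : (i : ℕ) + 1 ≠ (j : ℕ) := by omega
          simp [Ne.symm hij', c2]
      · rw [dif_neg h1]
        by_cases h2 : 1 ≤ (j : ℕ)
        · rw [dif_pos h2]
          have c3 : (i : ℕ) ≠ (j : ℕ) - 1 + 1 := by omega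
          have c4 : (i : ℕ) ≠ (j : ℕ) - 1 := by
            intro hc
            have : (j:ℕ) < n := j.isLt
            omega
          simp [Ne.symm hij', c3, c4]
        · rw [dif_neg h2]; simp
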